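/- Let G be a finite simple graph, C a longest cycle in G, and P a longest path in G \ C with endpoints x, y and length p ≥ 0. Suppose N_C(x) = N_C(y) and |N_C(x)| ≥ 2. Let I_a and I_b be two distinct elementary segments on C created by N_C(x), and let L be an intermediate path between I_a and I_b (a path from an interior vertex of I_a to an interior vertex of I_b internally disjoint from C ∪ P). Then |I_a| + |I_b| ≥ 2p + 2|L| + 4. -/

import Mathlib

open SimpleGraph Finset

namespace Paper

variable {V : Type*}

/-- Number of connected components of `G` after deleting the vertex set `S`. -/
noncomputable def compCount (G : SimpleGraph V) (S : Set V) : ℕ :=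
  Nat.card ((G.induce Sᶜ).ConnectedComponent)

/-- `G` is 1-tough: every cutset `S` satisfies `|S| ≥ s(G \ S)`. -/
def OneTough [Fintype V] (G : SimpleGraph V) : Prop :=
  ∀ S : Finset V, 1 < compCount G ↑S → compCount G ↑S ≤ S.card

/-- The toughness of `G` equals 1. -/
def ToughnessEqOne [Fintype V] (G : SimpleGraph V) : Prop :=
  OneTough G ∧ ∃ S : Finset V, 1 < compCount G ↑S ∧ compCount G ↑S = S.card

/-- The vertex connectivity of `G` equals 2. -/
def ConnectivityEqTwo [Fintype V] (G : SimpleGraph V) : Prop :=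
  (∀ S : Finset V, S.card ≤ 1 → (G.induce (↑S : Set V)ᶜ).Connected) ∧
  ∃ S : Finset V, S.card = 2 ∧ ¬ (G.induce (↑S : Set V)ᶜ).Connected

/-- `G` is 3-connected: it stays connected after removing any 2 vertices. -/
def ThreeConnected [Fintype V] (G : SimpleGraph V) : Prop :=
  ∀ S : Finset V, S.card ≤ 2 → (G.induce (↑S : Set V)ᶜ).Connected

/-- `c` is a longest cycle of `G`. -/
def IsLongestCycle {G : SimpleGraph V} {u : V} (c : G.Walk u u) : Prop :=
  c.IsCycle ∧ ∀ (v : V) (d : G.Walk v v), d.IsCycle → d.length ≤ c.length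

/-- The cycle `c` is dominating: `G \ V(c)` is edgeless. -/
def IsDominating {G : SimpleGraph V} {u : V} (c : G.Walk u u) : Prop :=
  ∀ a b : V, G.Adj a b → a ∈ c.support ∨ b ∈ c.support

/-- The walk `p` avoids all vertices of the cycle `c`. -/
def AvoidsCycle {G : SimpleGraph V} {u x y : V} (c : G.Walk u u) (p : G.Walk x y) : Prop :=
  ∀ v ∈ p.support, v ∉ c.support

/-- `p` is a longest path of `G \ V(c)`. -/
def IsLongestPathOutside {G : SimpleGraph V} {u x y : V} (c : G.Walk u u)
    (p : G.Walk x y) : Prop :=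
  p.IsPath ∧ AvoidsCycle c p ∧
  ∀ (a b : V) (q : G.Walk a b), q.IsPath → AvoidsCycle c q → q.length ≤ p.length

/-- `N_C(x)`: the neighbors of `x` lying on the cycle `c`. -/
def NC [Fintype V] [DecidableEq V] (G : SimpleGraph V) [DecidableRel G.Adj]
    {u : V} (c : G.Walk u u) (x : V) : Finset V :=
  (G.neighborFinset x).filter (fun v => v ∈ c.support)

/-- The interior vertices of a segment (the walk minus its endpoints). -/
def interior {G : SimpleGraph V} {a b : V} (I : G.Walk a b) : Set V :=
  {v | v ∈ I.support ∧ v ≠ a ∧ v ≠ b}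

/-- `I` is an elementary segment of the cycle `c` created by the attachment set `A`:
an arc of `c` between consecutive vertices of `A`. -/
def IsSegment {G : SimpleGraph V} {u : V} (c : G.Walk u u)
    (A : Finset V) {a b : V} (I : G.Walk a b) : Prop :=
  I.IsPath ∧ 1 ≤ I.length ∧ a ∈ A ∧ b ∈ A ∧
  (∀ v ∈ I.support, v ∈ c.support) ∧
  (∀ e ∈ I.edges, e ∈ c.edges) ∧
  ∀ v ∈ interior I, v ∉ A

/-- `L` is an intermediate path between the elementary segments `Ia` and `Ib`:
it joins interior vertices of `Ia` and `Ib` and is internally disjoint from `c ∪ P`. -/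
def IsIntermediatePath {G : SimpleGraph V} {u x y : V} (c : G.Walk u u) (P : G.Walk x y)
    {a b a' b' z w : V} (Ia : G.Walk a b) (Ib : G.Walk a' b') (L : G.Walk z w) : Prop :=
  L.IsPath ∧ 1 ≤ L.length ∧ z ∈ interior Ia ∧ w ∈ interior Ib ∧
  ∀ v ∈ L.support, (v ∈ c.support ∨ v ∈ P.support) → v = z ∨ v = w

/-- Membership in the exceptional class `𝔉₁`. -/
def InF1 [Fintype V] (H : SimpleGraph V) [DecidableRel H.Adj] (d : ℕ) : Prop :=
  ∃ (x y₁ y₂ y₃ : V) (A : Fin 3 → Set V),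
    (∀ i j, i ≠ j → A i ∩ A j = {x}) ∧
    (⋃ i, A i) = Set.univ ∧
    y₁ ∈ A 0 ∧ y₂ ∈ A 1 ∧ y₃ ∈ A 2 ∧ y₁ ≠ x ∧ y₂ ≠ x ∧ y₃ ≠ x ∧
    H.Adj y₁ y₂ ∧ H.Adj y₂ y₃ ∧ H.Adj y₁ y₃ ∧
    (∀ a b : V, H.Adj a b → (∃ i, a ∈ A i ∧ b ∈ A i) ∨
      s(a, b) ∈ ({s(y₁, y₂), s(y₂, y₃), s(y₁, y₃)} : Set (Sym2 V))) ∧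
    (∀ i, (H.induce (A i)).Connected) ∧
    Nat.card (A 0) = d + 1 ∧ Nat.card (A 1) = d + 1 ∧
    d + 1 ≤ Nat.card (A 2) ∧ Nat.card (A 2) ≤ d + 2 ∧
    H.minDegree = d ∧ 3 ≤ d

/-- Membership in the exceptional class `𝔉₂`. -/
def InF2 [Fintype V] (H : SimpleGraph V) [DecidableRel H.Adj] : Prop :=
  ∃ (x z y₁ y₂ y₃ : V) (A : Fin 3 → Set V),
    (∀ i j, i ≠ j → A i ∩ A j = {x}) ∧
    ((⋃ i, A i) ∪ {z}) = Set.univ ∧ z ∉ ⋃ i, A i ∧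
    y₁ ∈ A 0 ∧ y₂ ∈ A 1 ∧ y₃ ∈ A 2 ∧ y₁ ≠ x ∧ y₂ ≠ x ∧ y₃ ≠ x ∧
    H.Adj z y₁ ∧ H.Adj z y₂ ∧ H.Adj z y₃ ∧ H.Adj y₁ y₂ ∧
    (∀ a b : V, H.Adj a b → (∃ i, a ∈ A i ∧ b ∈ A i) ∨
      s(a, b) ∈ ({s(z, y₁), s(z, y₂), s(z, y₃), s(y₁, y₂), s(y₁, y₃), s(y₂, y₃),
        s(z, x)} : Set (Sym2 V))) ∧
    (∀ i, Nat.card (A i) = 4) ∧ H.minDegree = 3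

/-- Membership in the exceptional class `𝔉₃`. -/
def InF3 [Fintype V] (H : SimpleGraph V) [DecidableRel H.Adj] : Prop :=
  ∃ (x z y₁ y₂ y₃ : V) (A : Fin 3 → Set V),
    (∀ i j, i ≠ j → A i ∩ A j = {x}) ∧
    ((⋃ i, A i) ∪ {z}) = Set.univ ∧ z ∉ ⋃ i, A i ∧
    y₁ ∈ A 0 ∧ y₂ ∈ A 1 ∧ y₃ ∈ A 2 ∧ y₁ ≠ x ∧ y₂ ≠ x ∧ y₃ ≠ x ∧
    H.Adj z y₁ ∧ H.Adj z y₂ ∧ H.Adj z y₃ ∧ H.Adj z x ∧ H.Adj y₁ y₂ ∧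
    (∀ a b : V, H.Adj a b → (∃ i, a ∈ A i ∧ b ∈ A i) ∨
      s(a, b) ∈ ({s(z, y₁), s(z, y₂), s(z, y₃), s(z, x), s(y₁, y₂), s(y₁, y₃),
        s(y₂, y₃)} : Set (Sym2 V))) ∧
    (∀ i, Nat.card (A i) = 5) ∧ H.minDegree = 4

/-- Membership in the exceptional class `𝔉₄`. -/
def InF4 [Fintype V] (H : SimpleGraph V) [DecidableRel H.Adj] : Prop :=
  ∃ (x y : V) (z : Fin 4 → V) (A : Fin 4 → Set V),
    x ≠ y ∧
    (∀ i j, i ≠ j → A i ∩ A j = {x, y}) ∧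
    (⋃ i, A i) = Set.univ ∧
    (∀ i, z i ∈ A i ∧ z i ≠ x ∧ z i ≠ y) ∧
    H.Adj (z 0) (z 1) ∧ H.Adj (z 1) (z 2) ∧ H.Adj (z 0) (z 2) ∧
    (∀ a b : V, H.Adj a b → (∃ i, a ∈ A i ∧ b ∈ A i) ∨
      s(a, b) ∈ ({s(z 0, z 1), s(z 1, z 2), s(z 0, z 2)} : Set (Sym2 V))) ∧
    (∀ i, Nat.card (A i) = 5) ∧ H.minDegree = 4

section ExchangeHelpers
open Walk
variable {G : SimpleGraph V}

-- unique edge at start of a path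
lemma edge_at_start {v t : V} (p : G.Walk v t) (hp : p.IsPath) {e : Sym2 V}
    (he : e ∈ p.edges) (hv : v ∈ e) :
    ∃ (w' : V) (h : G.Adj v w') (q : G.Walk w' t), p = Walk.cons h q ∧ e = s(v, w') := by
  cases p with
  | nil => simp at he
  | cons h q =>
    rename_i w'
    rw [Walk.edges_cons, List.mem_cons] at he
    rcases he with rfl | he
    · exact ⟨w', h, q, rfl, rfl⟩
    · exfalso
      have hvq : v ∈ q.support := by
        induction e using Sym2.ind with
        | _ x' y' =>
          rcases Sym2.mem_iff.mp hv with rfl | rfl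
          · exact q.fst_mem_support_of_mem_edges he
          · exact q.snd_mem_support_of_mem_edges he
      exact ((Walk.cons_isPath_iff h q).mp hp).2 hvq

lemma path_prefix {v t b : V} (J : G.Walk v b) (hJ : J.IsPath) :
    ∀ (p : G.Walk v t), p.IsPath → (∀ e ∈ J.edges, e ∈ p.edges) →
    ∃ E : G.Walk b t, p = J.append E := by
  induction J with
  | nil => exact fun p _ _ => ⟨p, (Walk.nil_append p).symm⟩
  | @cons v v₂ b h J₂ ih =>
    intro p hp hsub
    have he : s(v, v₂) ∈ p.edges := hsub _ (by simp)
    obtain ⟨w', h', q, rfl, hew⟩ := edge_at_start p hp he (by simp)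
    have hw : w' = v₂ := by
      rcases Sym2.eq_iff.mp hew with ⟨-, h4⟩ | ⟨h4, h5⟩
      · exact h4.symm
      · exact absurd h5.symm (G.ne_of_adj h)
    subst hw
    have hJp := (Walk.cons_isPath_iff h J₂).mp hJ
    have hpp := (Walk.cons_isPath_iff h' q).mp hp
    have hsub2 : ∀ e ∈ J₂.edges, e ∈ q.edges := by
      intro e heJ
      have := hsub e (by simp [heJ])
      rw [Walk.edges_cons, List.mem_cons] at this
      rcases this with rfl | h3
      · exfalso
        exact hJp.2 (J₂.fst_mem_support_of_mem_edges heJ)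
      · exact h3
    obtain ⟨E, rfl⟩ := ih hJp.1 q hpp.1 hsub2
    exact ⟨E, by rw [Walk.cons_append]⟩

lemma exists_edge_start {s a : V} (q : G.Walk s a) (hq : ¬ q.Nil) :
    ∃ e ∈ q.edges, s ∈ e := by
  cases q with
  | nil => simp at hq
  | @cons _ w _ h q => exact ⟨s(s, w), by simp, by simp⟩

lemma exists_edge_end {s a : V} (q : G.Walk a s) (hq : ¬ q.Nil) :
    ∃ e ∈ q.edges, s ∈ e := by
  obtain ⟨e, he, hs⟩ := exists_edge_start q.reverse
    (by rw [Walk.not_nil_iff_lt_length, Walk.length_reverse]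
        rwa [Walk.not_nil_iff_lt_length] at hq)
  exact ⟨e, by simpa using he, hs⟩

/-- An internal vertex of a path lies on two distinct edges. -/
lemma internal_two_edges [DecidableEq V] {v b s : V} (J : G.Walk v b) (hJ : J.IsPath)
    (hs : s ∈ J.support) (hsv : s ≠ v) (hsb : s ≠ b) :
    ∃ e₁ ∈ J.edges, ∃ e₂ ∈ J.edges, e₁ ≠ e₂ ∧ s ∈ e₁ ∧ s ∈ e₂ := by
  obtain ⟨e₁, he₁, hs₁⟩ := exists_edge_end (J.takeUntil s hs)
    (Walk.not_nil_of_ne (fun h => hsv h.symm))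
  obtain ⟨e₂, he₂, hs₂⟩ := exists_edge_start (J.dropUntil s hs)
    (Walk.not_nil_of_ne hsb)
  refine ⟨e₁, J.edges_takeUntil_subset hs he₁, e₂, J.edges_dropUntil_subset hs he₂, ?_, hs₁, hs₂⟩
  have hnd : (J.edges).Nodup := hJ.isTrail.edges_nodup
  rw [← J.take_spec hs, Walk.edges_append] at hnd
  intro h
  subst h
  exact (List.disjoint_of_nodup_append hnd) he₁ he₂

lemma path_infix {s t v b : V} (p : G.Walk s t) (hp : p.IsPath) (J : G.Walk v b)
    (hJ : J.IsPath) (hlen : 1 ≤ J.length) (hsub : ∀ e ∈ J.edges, e ∈ p.edges) :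
    (∃ (B1 : G.Walk s v) (B2 : G.Walk b t), p = B1.append (J.append B2)) ∨
    (∃ (B1 : G.Walk s b) (B2 : G.Walk v t), p = B1.append (J.reverse.append B2)) := by
  classical
  induction p with
  | nil =>
    exfalso
    cases J with
    | nil => simp at hlen
    | @cons _ w _ h J₂ => simpa using hsub s(v, w) (by simp)
  | @cons s s₂ t h' p₂ ih =>
    have hpp := (Walk.cons_isPath_iff h' p₂).mp hp
    by_cases hsJ : s ∈ J.support
    · -- terminal case
      have huniq : ∀ e ∈ (Walk.cons h' p₂).edges, s ∈ e → e = s(s, s₂) := by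
        intro e he hse
        rw [Walk.edges_cons, List.mem_cons] at he
        rcases he with rfl | he
        · rfl
        · exfalso
          induction e using Sym2.ind with
          | _ x' y' =>
            rcases Sym2.mem_iff.mp hse with rfl | rfl
            · exact hpp.2 (p₂.fst_mem_support_of_mem_edges he)
            · exact hpp.2 (p₂.snd_mem_support_of_mem_edges he)
      by_cases hsv : s = v
      · subst hsv
        obtain ⟨E, hE⟩ := path_prefix J hJ _ hp hsub
        exact Or.inl ⟨Walk.nil, E, by rwa [Walk.nil_append]⟩
      · by_cases hsb : s = b
        · subst hsb
          obtain ⟨E, hE⟩ := path_prefix J.reverse hJ.reverse _ hp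
            (fun e he => hsub e (by simpa using he))
          exact Or.inr ⟨Walk.nil, E, by rwa [Walk.nil_append]⟩
        · exfalso
          obtain ⟨e₁, he₁, e₂, he₂, hne, hs₁, hs₂⟩ := internal_two_edges J hJ hsJ hsv hsb
          exact hne ((huniq e₁ (hsub _ he₁) hs₁).trans (huniq e₂ (hsub _ he₂) hs₂).symm)
    · have hsub2 : ∀ e ∈ J.edges, e ∈ p₂.edges := by
        intro e he
        have := hsub e he
        rw [Walk.edges_cons, List.mem_cons] at this
        rcases this with rfl | h3
        · exact absurd (J.fst_mem_support_of_mem_edges he) hsJ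
        · exact h3
      rcases ih hpp.1 hsub2 with ⟨B1, B2, hB⟩ | ⟨B1, B2, hB⟩
      · exact Or.inl ⟨Walk.cons h' B1, B2, by rw [hB, Walk.cons_append]⟩
      · exact Or.inr ⟨Walk.cons h' B1, B2, by rw [hB, Walk.cons_append]⟩

lemma isCycle_reverse {a : V} {d : G.Walk a a} (h : d.IsCycle) : d.reverse.IsCycle := by
  cases d with
  | nil => exact absurd rfl h.ne_nil
  | @cons _ a₂ _ h₀ q =>
    rw [Walk.isCycle_def] at h ⊢
    obtain ⟨ht, hne, hnd⟩ := h
    refine ⟨ht.reverse _, by intro hcon; have := congrArg Walk.length hcon; simp at this, ?_⟩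
    rw [Walk.support_reverse, Walk.support_cons, List.tail_reverse, List.nodup_reverse]
    have hqne : q.support ≠ [] := q.support_ne_nil
    rw [List.dropLast_cons_of_ne_nil hqne]
    rw [Walk.support_cons, List.tail_cons] at hnd
    have hq2 : q.support.dropLast ++ [a] = q.support := by
      have h5 := List.dropLast_append_getLast hqne
      rwa [q.getLast_support] at h5
    rw [← hq2] at hnd
    have hdisj := List.disjoint_of_nodup_append hnd
    exact List.Nodup.cons (fun hmem => hdisj hmem (by simp)) (List.Nodup.of_append_left hnd)

lemma append_isPath {a b c : V} {p : G.Walk a b} {q : G.Walk b c}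
    (hp : p.IsPath) (hq : q.IsPath)
    (h : ∀ v, v ∈ p.support → v ∈ q.support → v = b) :
    (p.append q).IsPath := by
  apply Walk.IsPath.mk'
  rw [Walk.support_append]
  apply List.Nodup.append hp.support_nodup (hq.support_nodup.sublist (List.tail_sublist _))
  intro v hv hv'
  have hb : v = b := h v hv (List.mem_of_mem_tail hv')
  subst hb
  have := hq.support_nodup
  rw [q.support_eq_cons] at this
  exact (List.nodup_cons.mp this).1 hv'

lemma cycle_prefix {a b₂ : V} (d0 : G.Walk a a) (hd0 : d0.IsCycle) (I : G.Walk a b₂)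
    (hI : I.IsPath) (hlen : 1 ≤ I.length) (hsub : ∀ e ∈ I.edges, e ∈ d0.edges) :
    (∃ E : G.Walk b₂ a, d0 = I.append E) ∨ (∃ E : G.Walk b₂ a, d0.reverse = I.append E) := by
  cases I with
  | nil => simp at hlen
  | @cons _ i₂ _ hI₁ I₂ =>
    have hIp := (Walk.cons_isPath_iff hI₁ I₂).mp hI
    cases d0 with
    | nil => exact absurd rfl hd0.ne_nil
    | @cons _ a₂ _ h₀ q =>
      have hq := (Walk.cons_isCycle_iff q h₀).mp hd0
      have he₁ : s(a, i₂) ∈ (Walk.cons h₀ q).edges := hsub _ (by simp)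
      rw [Walk.edges_cons, List.mem_cons] at he₁
      rcases he₁ with heq | hmem
      · have hi : i₂ = a₂ := by
          rcases Sym2.eq_iff.mp heq with ⟨-, h4⟩ | ⟨h4, h5⟩
          · exact h4
          · exact absurd h4 (G.ne_of_adj h₀)
        subst hi
        have hsub2 : ∀ e ∈ I₂.edges, e ∈ q.edges := by
          intro e he
          have := hsub e (by simp [he])
          rw [Walk.edges_cons, List.mem_cons] at this
          rcases this with rfl | h3
          · exact absurd (I₂.fst_mem_support_of_mem_edges he) hIp.2
          · exact h3
        obtain ⟨E, hE⟩ := path_prefix I₂ hIp.1 q hq.1 hsub2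
        exact Or.inl ⟨E, by rw [hE, Walk.cons_append]⟩
      · have hmem' : s(a, i₂) ∈ q.reverse.edges := by
          rw [Walk.edges_reverse, List.mem_reverse]; exact hmem
        obtain ⟨w', h₂, r, hqr, hew⟩ := edge_at_start q.reverse hq.1.reverse hmem' (by simp)
        have hw : w' = i₂ := by
          rcases Sym2.eq_iff.mp hew with ⟨-, h4⟩ | ⟨h4, h5⟩
          · exact h4.symm
          · exact absurd h5.symm (G.ne_of_adj hI₁)
        subst hw
        have hrp : r.IsPath := by
          have := hq.1.reverse
          rw [hqr] at this
          exact ((Walk.cons_isPath_iff h₂ r).mp this).1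
        have hsub2 : ∀ e ∈ I₂.edges, e ∈ r.edges := by
          intro e he
          have h6 := hsub e (by simp [he])
          rw [Walk.edges_cons, List.mem_cons] at h6
          rcases h6 with rfl | h6
          · exact absurd (I₂.fst_mem_support_of_mem_edges he) hIp.2
          · have : e ∈ q.reverse.edges := by rw [Walk.edges_reverse, List.mem_reverse]; exact h6
            rw [hqr, Walk.edges_cons, List.mem_cons] at this
            rcases this with rfl | h7
            · exact absurd (I₂.fst_mem_support_of_mem_edges he) hIp.2
            · exact h7
        obtain ⟨E', hE'⟩ := path_prefix I₂ hIp.1 r hrp hsub2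
        refine Or.inr ⟨E'.append (Walk.cons h₀.symm Walk.nil), ?_⟩
        rw [Walk.reverse_cons, hqr, hE', Walk.cons_append, Walk.append_assoc,
          Walk.cons_append, Walk.cons_append]

lemma length_rotate' [DecidableEq V] {u v : V} (c : G.Walk v v) (h : u ∈ c.support) :
    (c.rotate u h).length = c.length := by
  have h2 := congrArg Walk.length (c.take_spec h)
  rw [Walk.length_append] at h2
  unfold Walk.rotate
  rw [Walk.length_append]
  omega

lemma mem_support_closed_iff {u : V} (d : G.Walk u u) (hne : ¬ d.Nil) (v : V) :
    v ∈ d.support ↔ v ∈ d.support.tail := by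
  constructor
  · intro hv
    cases d with
    | nil => simp at hne
    | cons h q =>
      rw [Walk.support_cons] at hv ⊢
      rw [List.tail_cons]
      rcases List.mem_cons.mp hv with rfl | hv
      · exact q.end_mem_support
      · exact hv
  · exact List.mem_of_mem_tail

lemma arc [DecidableEq V] {u a b₂ : V} (c : G.Walk u u) (hc : c.IsCycle) (I : G.Walk a b₂)
    (hI : I.IsPath) (hlen : 1 ≤ I.length) (hsub : ∀ e ∈ I.edges, e ∈ c.edges) :
    ∃ E : G.Walk b₂ a, (I.append E).IsCycle ∧ (I.append E).length = c.length ∧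
      (∀ e, e ∈ (I.append E).edges ↔ e ∈ c.edges) ∧
      (∀ v, v ∈ (I.append E).support ↔ v ∈ c.support) := by
  have hInn : ¬ I.Nil := by rw [Walk.not_nil_iff_lt_length]; omega
  have ha : a ∈ c.support := by
    obtain ⟨e, he, hae⟩ := exists_edge_start I hInn
    induction e using Sym2.ind with
    | _ x' y' =>
      rcases Sym2.mem_iff.mp hae with rfl | rfl
      · exact c.fst_mem_support_of_mem_edges (hsub _ he)
      · exact c.snd_mem_support_of_mem_edges (hsub _ he)
  set d0 := c.rotate a ha with hd0def
  have hd0 : d0.IsCycle := hc.rotate ha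
  have hd0nn : ¬ d0.Nil := hd0.not_nil
  have hcnn : ¬ c.Nil := hc.not_nil
  have hperm : ∀ e, e ∈ d0.edges ↔ e ∈ c.edges :=
    fun e => (c.rotate_edges a ha).perm.mem_iff
  have hsupp : ∀ v, v ∈ d0.support ↔ v ∈ c.support := by
    intro v
    rw [mem_support_closed_iff d0 hd0nn, mem_support_closed_iff c hcnn]
    exact (Walk.support_rotate c a ha).perm.mem_iff
  have hlen0 : d0.length = c.length := length_rotate' c ha
  have hsub0 : ∀ e ∈ I.edges, e ∈ d0.edges := fun e he => (hperm e).mpr (hsub e he)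
  rcases cycle_prefix d0 hd0 I hI hlen hsub0 with ⟨E, hE⟩ | ⟨E, hE⟩
  · refine ⟨E, ?_, ?_, ?_, ?_⟩ <;> rw [← hE]
    · exact hd0
    · exact hlen0
    · exact hperm
    · exact hsupp
  · refine ⟨E, ?_, ?_, ?_, ?_⟩ <;> rw [← hE]
    · exact isCycle_reverse hd0
    · rw [Walk.length_reverse]; exact hlen0
    · intro e; rw [Walk.edges_reverse, List.mem_reverse]; exact hperm e
    · intro v; rw [Walk.support_reverse, List.mem_reverse]; exact hsupp v

lemma closed_path_length {a : V} {r : G.Walk a a} (h : r.IsPath) : r.length = 0 := by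
  cases r with
  | nil => rfl
  | cons h₀ q =>
    exfalso
    have hnd := h.support_nodup
    rw [Walk.support_cons] at hnd
    exact (List.nodup_cons.mp hnd).1 q.end_mem_support

lemma two_le_length_of_internal {a b z : V} (p : G.Walk a b) (hz : z ∈ p.support)
    (h1 : z ≠ a) (h2 : z ≠ b) : 2 ≤ p.length := by
  cases p with
  | nil => simp at hz; exact absurd hz h1
  | cons h₀ q =>
    cases q with
    | nil =>
      simp at hz
      rcases hz with rfl | rfl
      · exact absurd rfl h1
      · exact absurd rfl h2
    | cons h₁ r => simp only [Walk.length_cons]; omega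

lemma edge_between_ends {a b : V} (p : G.Walk a b) (hp : p.IsPath)
    (he : s(a, b) ∈ p.edges) : p.length = 1 := by
  have hab : a ≠ b := G.ne_of_adj (p.adj_of_mem_edges he)
  have he' : s(b, a) ∈ p.reverse.edges := by
    rw [Walk.edges_reverse, List.mem_reverse, Sym2.eq_swap]
    exact he
  obtain ⟨w', h₂, r, hqr, hew⟩ := edge_at_start p.reverse hp.reverse he' (by simp)
  have hw : w' = a := by
    rcases Sym2.eq_iff.mp hew with ⟨-, h4⟩ | ⟨h4, h5⟩
    · exact h4.symm
    · exact absurd h5 hab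
  subst hw
  have hr : r.IsPath := by
    have := hp.reverse
    rw [hqr] at this
    exact ((Walk.cons_isPath_iff h₂ r).mp this).1
  have h0 := closed_path_length hr
  have := congrArg Walk.length hqr
  rw [Walk.length_reverse, Walk.length_cons, h0] at this
  omega


section M
variable [DecidableEq V] {a z b a' w b' x y : V}

set_option maxHeartbeats 1000000 in
lemma main_M (Q1 : G.Walk a z) (Q2 : G.Walk z b) (B1 : G.Walk b a') (R1 : G.Walk a' w)
    (R2 : G.Walk w b') (B2 : G.Walk b' a)
    (hd : (Q1.append (Q2.append (B1.append (R1.append (R2.append B2))))).IsCycle)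
    (Hmax : ∀ (v : V) (q : G.Walk v v), q.IsCycle →
      q.length ≤ (Q1.append (Q2.append (B1.append (R1.append (R2.append B2))))).length)
    (hza : z ≠ a) (hzb : z ≠ b) (hwa' : w ≠ a') (hwb' : w ≠ b') (hzw : z ≠ w)
    (P : G.Walk x y) (hP : P.IsPath)
    (hPd : ∀ v ∈ P.support,
      v ∉ (Q1.append (Q2.append (B1.append (R1.append (R2.append B2))))).support)
    (L : G.Walk z w) (hLp : L.IsPath) (hLlen : 1 ≤ L.length)
    (hLint : ∀ v ∈ L.support,
      (v ∈ (Q1.append (Q2.append (B1.append (R1.append (R2.append B2))))).support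
        ∨ v ∈ P.support) → v = z ∨ v = w)
    (hax : G.Adj a x) (hbx : G.Adj b x) (hya' : G.Adj y a') (hyb' : G.Adj y b') :
    2 * P.length + 2 * L.length + 4 ≤ (Q1.length + Q2.length) + (R1.length + R2.length) := by
  set d := Q1.append (Q2.append (B1.append (R1.append (R2.append B2)))) with hddef
  set Q1t := Q1.support.tail with hQ1t
  set Q2t := Q2.support.tail with hQ2t
  set B1t := B1.support.tail with hB1t
  set R1t := R1.support.tail with hR1t
  set R2t := R2.support.tail with hR2t
  set B2t := B2.support.tail with hB2t
  have hSd : d.support.tail = Q1t ++ (Q2t ++ (B1t ++ (R1t ++ (R2t ++ B2t)))) := by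
    rw [hddef]
    simp only [Walk.tail_support_append]
    rfl
  have hnd : (Q1t ++ (Q2t ++ (B1t ++ (R1t ++ (R2t ++ B2t))))).Nodup := by
    rw [← hSd]
    exact ((Walk.isCycle_def d).mp hd).2.2
  obtain ⟨nQ1, hnd1, dQ1⟩ := List.nodup_append.mp hnd
  obtain ⟨nQ2, hnd2, dQ2⟩ := List.nodup_append.mp hnd1
  obtain ⟨nB1, hnd3, dB1⟩ := List.nodup_append.mp hnd2
  obtain ⟨nR1, hnd4, dR1⟩ := List.nodup_append.mp hnd3
  obtain ⟨nR2, nB2, dR2⟩ := List.nodup_append.mp hnd4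
  have d1 : ∀ v ∈ Q1t, (v ∈ Q2t ∨ v ∈ B1t ∨ v ∈ R1t ∨ v ∈ R2t ∨ v ∈ B2t) → False := by
    intro v hv hv'
    exact dQ1 v hv v (by simp only [List.mem_append]; tauto) rfl
  have d2 : ∀ v ∈ Q2t, (v ∈ B1t ∨ v ∈ R1t ∨ v ∈ R2t ∨ v ∈ B2t) → False := by
    intro v hv hv'
    exact dQ2 v hv v (by simp only [List.mem_append]; tauto) rfl
  have d3 : ∀ v ∈ B1t, (v ∈ R1t ∨ v ∈ R2t ∨ v ∈ B2t) → False := by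
    intro v hv hv'
    exact dB1 v hv v (by simp only [List.mem_append]; tauto) rfl
  have d4 : ∀ v ∈ R1t, (v ∈ R2t ∨ v ∈ B2t) → False := by
    intro v hv hv'
    exact dR1 v hv v (by simp only [List.mem_append]; tauto) rfl
  have d5 : ∀ v ∈ R2t, v ∈ B2t → False := fun v hv hv' => dR2 v hv v hv' rfl
  -- locations of the key vertices
  have hz1 : z ∈ Q1t := Walk.end_mem_tail_support_of_ne (Ne.symm hza) Q1
  have hb2 : b ∈ Q2t := Walk.end_mem_tail_support_of_ne hzb Q2
  have hw4 : w ∈ R1t := Walk.end_mem_tail_support_of_ne (Ne.symm hwa') R1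
  have hb'5 : b' ∈ R2t := Walk.end_mem_tail_support_of_ne hwb' R2
  have ha6 : a ∈ R2t ∨ a ∈ B2t := by
    by_cases hba : b' = a
    · subst hba
      exact Or.inl hb'5
    · exact Or.inr (Walk.end_mem_tail_support_of_ne hba B2)
  have ha'3 : a' ∈ Q2t ∨ a' ∈ B1t := by
    by_cases hba : b = a'
    · subst hba
      exact Or.inl hb2
    · exact Or.inr (Walk.end_mem_tail_support_of_ne hba B1)
  -- support descriptions
  have sQ1 : ∀ v, v ∈ Q1.support ↔ v = a ∨ v ∈ Q1t := by
    intro v; conv_lhs => rw [Q1.support_eq_cons]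
    simp only [List.mem_cons, hQ1t]
  have sQ2 : ∀ v, v ∈ Q2.support ↔ v = z ∨ v ∈ Q2t := by
    intro v; conv_lhs => rw [Q2.support_eq_cons]
    simp only [List.mem_cons, hQ2t]
  have sB1 : ∀ v, v ∈ B1.support ↔ v = b ∨ v ∈ B1t := by
    intro v; conv_lhs => rw [B1.support_eq_cons]
    simp only [List.mem_cons, hB1t]
  have sR1 : ∀ v, v ∈ R1.support ↔ v = a' ∨ v ∈ R1t := by
    intro v; conv_lhs => rw [R1.support_eq_cons]
    simp only [List.mem_cons, hR1t]
  have sR2 : ∀ v, v ∈ R2.support ↔ v = w ∨ v ∈ R2t := by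
    intro v; conv_lhs => rw [R2.support_eq_cons]
    simp only [List.mem_cons, hR2t]
  have sB2 : ∀ v, v ∈ B2.support ↔ v = b' ∨ v ∈ B2t := by
    intro v; conv_lhs => rw [B2.support_eq_cons]
    simp only [List.mem_cons, hB2t]
  have hdmem : ∀ v, v ∈ d.support ↔
      (v = a ∨ (v ∈ Q1t ∨ v ∈ Q2t ∨ v ∈ B1t ∨ v ∈ R1t ∨ v ∈ R2t ∨ v ∈ B2t)) := by
    intro v
    conv_lhs => rw [d.support_eq_cons]
    rw [hSd]
    simp only [List.mem_cons, List.mem_append]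
  have inQ1d : ∀ v ∈ Q1.support, v ∈ d.support := by
    intro v hv
    rcases (sQ1 v).mp hv with rfl | h
    · exact (hdmem v).mpr (Or.inl rfl)
    · exact (hdmem v).mpr (Or.inr (Or.inl h))
  have inQ2d : ∀ v ∈ Q2.support, v ∈ d.support := by
    intro v hv
    rcases (sQ2 v).mp hv with rfl | h
    · exact (hdmem v).mpr (Or.inr (Or.inl hz1))
    · exact (hdmem v).mpr (Or.inr (Or.inr (Or.inl h)))
  have inB1d : ∀ v ∈ B1.support, v ∈ d.support := by
    intro v hv
    rcases (sB1 v).mp hv with rfl | h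
    · exact (hdmem v).mpr (Or.inr (Or.inr (Or.inl hb2)))
    · exact (hdmem v).mpr (Or.inr (Or.inr (Or.inr (Or.inl h))))
  have inR1d : ∀ v ∈ R1.support, v ∈ d.support := by
    intro v hv
    rcases (sR1 v).mp hv with rfl | h
    · rcases ha'3 with h'|h'
      · exact (hdmem v).mpr (Or.inr (Or.inr (Or.inl h')))
      · exact (hdmem v).mpr (Or.inr (Or.inr (Or.inr (Or.inl h'))))
    · exact (hdmem v).mpr (Or.inr (Or.inr (Or.inr (Or.inr (Or.inl h)))))
  have inR2d : ∀ v ∈ R2.support, v ∈ d.support := by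
    intro v hv
    rcases (sR2 v).mp hv with rfl | h
    · exact (hdmem v).mpr (Or.inr (Or.inr (Or.inr (Or.inr (Or.inl hw4)))))
    · exact (hdmem v).mpr (Or.inr (Or.inr (Or.inr (Or.inr (Or.inr (Or.inl h))))))
  have inB2d : ∀ v ∈ B2.support, v ∈ d.support := by
    intro v hv
    rcases (sB2 v).mp hv with rfl | h
    · exact (hdmem v).mpr (Or.inr (Or.inr (Or.inr (Or.inr (Or.inr (Or.inl hb'5))))))
    · exact (hdmem v).mpr (Or.inr (Or.inr (Or.inr (Or.inr (Or.inr (Or.inr h))))))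
  -- basic distinctness
  have haa' : a ≠ a' := by
    rintro rfl
    rcases ha'3 with h'|h'
    · rcases ha6 with h|h
      · exact d2 _ h' (Or.inr (Or.inr (Or.inl h)))
      · exact d2 _ h' (Or.inr (Or.inr (Or.inr h)))
    · rcases ha6 with h|h
      · exact d3 _ h' (Or.inr (Or.inl h))
      · exact d3 _ h' (Or.inr (Or.inr h))
  have hab : a ≠ b := by
    rintro rfl
    rcases ha6 with h|h
    · exact d2 _ hb2 (Or.inr (Or.inr (Or.inl h)))
    · exact d2 _ hb2 (Or.inr (Or.inr (Or.inr h)))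
  have hbb' : b ≠ b' := by
    rintro rfl
    exact d2 _ hb2 (Or.inr (Or.inr (Or.inl hb'5)))
  -- the pieces are paths
  have pQ1 : Q1.IsPath := by
    apply Walk.IsPath.mk'
    rw [Q1.support_eq_cons, ← hQ1t]
    refine List.Nodup.cons (fun hmem => ?_) nQ1
    rcases ha6 with h|h
    · exact d1 _ hmem (Or.inr (Or.inr (Or.inr (Or.inl h))))
    · exact d1 _ hmem (Or.inr (Or.inr (Or.inr (Or.inr h))))
  have pQ2 : Q2.IsPath := by
    apply Walk.IsPath.mk'
    rw [Q2.support_eq_cons, ← hQ2t]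
    exact List.Nodup.cons (fun hmem => d1 _ hz1 (Or.inl hmem)) nQ2
  have pB1 : B1.IsPath := by
    apply Walk.IsPath.mk'
    rw [B1.support_eq_cons, ← hB1t]
    exact List.Nodup.cons (fun hmem => d2 _ hb2 (Or.inl hmem)) nB1
  have pR1 : R1.IsPath := by
    apply Walk.IsPath.mk'
    rw [R1.support_eq_cons, ← hR1t]
    refine List.Nodup.cons (fun hmem => ?_) nR1
    rcases ha'3 with h|h
    · exact d2 _ h (Or.inr (Or.inl hmem))
    · exact d3 _ h (Or.inl hmem)
  have pR2 : R2.IsPath := by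
    apply Walk.IsPath.mk'
    rw [R2.support_eq_cons, ← hR2t]
    exact List.Nodup.cons (fun hmem => d4 _ hw4 (Or.inl hmem)) nR2
  have pB2 : B2.IsPath := by
    apply Walk.IsPath.mk'
    rw [B2.support_eq_cons, ← hB2t]
    exact List.Nodup.cons (fun hmem => d5 _ hb'5 hmem) nB2
  -- auxiliary facts about P and L
  have hzd : z ∈ d.support := inQ1d _ Q1.end_mem_support
  have hwd : w ∈ d.support := inR1d _ R1.end_mem_support
  have hLdP : ∀ v ∈ L.support, v ∈ d.support → v = z ∨ v = w :=
    fun v hv hd' => hLint v hv (Or.inl hd')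
  have hPL : ∀ v ∈ P.support, v ∈ L.support → False := by
    intro v hv hv'
    rcases hLint v hv' (Or.inr hv) with rfl | rfl
    · exact hPd _ hv hzd
    · exact hPd _ hv hwd
  have hxd : x ∉ d.support := hPd _ P.start_mem_support
  have hyd : y ∉ d.support := hPd _ P.end_mem_support
  have hxL : x ∉ L.support := fun h => hPL _ P.start_mem_support h
  have hyL : y ∉ L.support := fun h => hPL _ P.end_mem_support h
  -- first exchange cycle
  have pW5 : (R2.append B2).IsPath := by
    apply append_isPath pR2 pB2
    intro v hv hv'
    rcases (sR2 v).mp hv with rfl | h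
    · rcases (sB2 v).mp hv' with h' | h'
      · exact h'
      · exact absurd (d4 _ hw4 (Or.inr h')) not_false
    · rcases (sB2 v).mp hv' with rfl | h'
      · rfl
      · exact absurd (d5 _ h h') not_false
  have sW5 : ∀ v ∈ (R2.append B2).support, v ∈ R2.support ∨ v ∈ B2.support := by
    intro v hv
    exact (Walk.mem_support_append_iff _ _).mp hv
  have pW4 : (L.append (R2.append B2)).IsPath := by
    apply append_isPath hLp pW5
    intro v hv hv'
    have hvd : v ∈ d.support := by
      rcases sW5 v hv' with h | h
      · exact inR2d _ h
      · exact inB2d _ h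
    rcases hLdP v hv hvd with rfl | rfl
    · exfalso
      rcases sW5 v hv' with h | h
      · rcases (sR2 v).mp h with rfl | h'
        · exact hzw rfl
        · exact d1 _ hz1 (Or.inr (Or.inr (Or.inr (Or.inl h'))))
      · rcases (sB2 v).mp h with rfl | h'
        · exact d1 _ hz1 (Or.inr (Or.inr (Or.inr (Or.inl hb'5))))
        · exact d1 _ hz1 (Or.inr (Or.inr (Or.inr (Or.inr h'))))
    · rfl
  have sW4 : ∀ v ∈ (L.append (R2.append B2)).support,
      v ∈ L.support ∨ v ∈ R2.support ∨ v ∈ B2.support := by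
    intro v hv
    rcases (Walk.mem_support_append_iff _ _).mp hv with h | h
    · exact Or.inl h
    · exact Or.inr (sW5 v h)
  have pW3 : (Q2.reverse.append (L.append (R2.append B2))).IsPath := by
    apply append_isPath pQ2.reverse pW4
    intro v hv hv'
    rw [Walk.support_reverse, List.mem_reverse] at hv
    rcases sW4 v hv' with h | h | h
    · rcases hLdP v h (inQ2d _ hv) with rfl | rfl
      · rfl
      · exfalso
        rcases (sQ2 v).mp hv with h' | h'
        · exact hzw h'.symm
        · exact d2 _ h' (Or.inr (Or.inl hw4))
    · exfalso
      rcases (sQ2 v).mp hv with rfl | h'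
      · rcases (sR2 v).mp h with h'' | h''
        · exact hzw h''
        · exact d1 _ hz1 (Or.inr (Or.inr (Or.inr (Or.inl h''))))
      · rcases (sR2 v).mp h with rfl | h''
        · exact d2 _ h' (Or.inr (Or.inl hw4))
        · exact d2 _ h' (Or.inr (Or.inr (Or.inl h'')))
    · exfalso
      rcases (sQ2 v).mp hv with rfl | h'
      · rcases (sB2 v).mp h with h'' | h''
        · exact d1 _ hz1 (Or.inr (Or.inr (Or.inr (Or.inl (h''.symm ▸ hb'5)))))
        · exact d1 _ hz1 (Or.inr (Or.inr (Or.inr (Or.inr h''))))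
      · rcases (sB2 v).mp h with rfl | h''
        · exact d2 _ h' (Or.inr (Or.inr (Or.inl hb'5)))
        · exact d2 _ h' (Or.inr (Or.inr (Or.inr h'')))
  have sW3 : ∀ v ∈ (Q2.reverse.append (L.append (R2.append B2))).support,
      v ∈ Q2.support ∨ v ∈ L.support ∨ v ∈ R2.support ∨ v ∈ B2.support := by
    intro v hv
    rcases (Walk.mem_support_append_iff _ _).mp hv with h | h
    · rw [Walk.support_reverse, List.mem_reverse] at h
      exact Or.inl h
    · exact Or.inr (sW4 v h)
  have pW2 : (B1.reverse.append (Q2.reverse.append (L.append (R2.append B2)))).IsPath := by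
    apply append_isPath pB1.reverse pW3
    intro v hv hv'
    rw [Walk.support_reverse, List.mem_reverse] at hv
    rcases sW3 v hv' with h | h | h | h
    · -- v ∈ Q2.support
      rcases (sB1 v).mp hv with rfl | h'
      · rfl
      · exfalso
        rcases (sQ2 v).mp h with rfl | h''
        · exact d1 _ hz1 (Or.inr (Or.inl h'))
        · exact d2 _ h'' (Or.inl h')
    · -- v ∈ L.support
      exfalso
      rcases hLdP v h (inB1d _ hv) with rfl | rfl
      · rcases (sB1 v).mp hv with h' | h'
        · exact hzb h'
        · exact d1 _ hz1 (Or.inr (Or.inl h'))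
      · rcases (sB1 v).mp hv with h' | h'
        · exact d2 _ hb2 (Or.inr (Or.inl (h' ▸ hw4)))
        · exact d3 _ h' (Or.inl hw4)
    · -- v ∈ R2.support
      exfalso
      rcases (sB1 v).mp hv with rfl | h'
      · rcases (sR2 v).mp h with h'' | h''
        · exact d2 _ hb2 (Or.inr (Or.inl (h'' ▸ hw4)))
        · exact d2 _ hb2 (Or.inr (Or.inr (Or.inl h'')))
      · rcases (sR2 v).mp h with rfl | h''
        · exact d3 _ h' (Or.inl hw4)
        · exact d3 _ h' (Or.inr (Or.inl h''))
    · -- v ∈ B2.support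
      exfalso
      rcases (sB1 v).mp hv with rfl | h'
      · rcases (sB2 v).mp h with h'' | h''
        · exact d2 _ hb2 (Or.inr (Or.inr (Or.inl (h'' ▸ hb'5))))
        · exact d2 _ hb2 (Or.inr (Or.inr (Or.inr h'')))
      · rcases (sB2 v).mp h with rfl | h''
        · exact d3 _ h' (Or.inr (Or.inl hb'5))
        · exact d3 _ h' (Or.inr (Or.inr h''))
  have sW2 : ∀ v ∈ (B1.reverse.append (Q2.reverse.append (L.append (R2.append B2)))).support,
      v ∈ d.support ∨ v ∈ L.support := by
    intro v hv
    rcases (Walk.mem_support_append_iff _ _).mp hv with h | h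
    · rw [Walk.support_reverse, List.mem_reverse] at h
      exact Or.inl (inB1d _ h)
    · rcases sW3 v h with h' | h' | h' | h'
      · exact Or.inl (inQ2d _ h')
      · exact Or.inr h'
      · exact Or.inl (inR2d _ h')
      · exact Or.inl (inB2d _ h')
  have pW1'' : (Walk.cons hya'
      (B1.reverse.append (Q2.reverse.append (L.append (R2.append B2))))).IsPath := by
    rw [Walk.cons_isPath_iff]
    refine ⟨pW2, fun hcon => ?_⟩
    rcases sW2 y hcon with h | h
    · exact hyd h
    · exact hyL h
  have pRest : (P.append (Walk.cons hya'
      (B1.reverse.append (Q2.reverse.append (L.append (R2.append B2)))))).IsPath := by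
    apply append_isPath hP pW1''
    intro v hv hv'
    rw [Walk.support_cons, List.mem_cons] at hv'
    rcases hv' with rfl | hv'
    · rfl
    · exfalso
      rcases sW2 v hv' with h | h
      · exact hPd _ hv h
      · exact hPL _ hv h
  have hW1cyc : (Walk.cons hax (P.append (Walk.cons hya'
      (B1.reverse.append (Q2.reverse.append (L.append (R2.append B2))))))).IsCycle := by
    rw [Walk.cons_isCycle_iff]
    refine ⟨pRest, fun hcon => ?_⟩
    rw [Walk.edges_append, List.mem_append] at hcon
    rcases hcon with hcon | hcon
    · exact hPd _ (P.fst_mem_support_of_mem_edges hcon) ((hdmem a).mpr (Or.inl rfl))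
    · rw [Walk.edges_cons, List.mem_cons] at hcon
      rcases hcon with hcon | hcon
      · rcases Sym2.eq_iff.mp hcon with ⟨h4, h5⟩ | ⟨h4, h5⟩
        · exact hyd (h4 ▸ (hdmem a).mpr (Or.inl rfl))
        · exact haa' h4
      · have : x ∈ (B1.reverse.append (Q2.reverse.append (L.append (R2.append B2)))).support := by
          have := Walk.snd_mem_support_of_mem_edges _ hcon
          exact this
        rcases sW2 x this with h | h
        · exact hxd h
        · exact hxL h
  have h1 := Hmax a _ hW1cyc
  simp only [Walk.length_cons, Walk.length_append, Walk.length_reverse] at h1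
  -- second exchange cycle
  have pV5 : (R1.reverse.append B1.reverse).IsPath := by
    apply append_isPath pR1.reverse pB1.reverse
    intro v hv hv'
    rw [Walk.support_reverse, List.mem_reverse] at hv hv'
    rcases (sR1 v).mp hv with rfl | h
    · rfl
    · exfalso
      rcases (sB1 v).mp hv' with rfl | h'
      · exact d2 _ hb2 (Or.inr (Or.inl h))
      · exact d3 _ h' (Or.inl h)
  have sV5 : ∀ v ∈ (R1.reverse.append B1.reverse).support,
      v ∈ R1.support ∨ v ∈ B1.support := by
    intro v hv
    rcases (Walk.mem_support_append_iff _ _).mp hv with h | h <;>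
      rw [Walk.support_reverse, List.mem_reverse] at h
    · exact Or.inl h
    · exact Or.inr h
  have pV4 : (L.append (R1.reverse.append B1.reverse)).IsPath := by
    apply append_isPath hLp pV5
    intro v hv hv'
    rcases sV5 v hv' with h | h
    · rcases hLdP v hv (inR1d _ h) with rfl | rfl
      · exfalso
        rcases (sR1 v).mp h with h' | h'
        · rcases ha'3 with h'' | h''
          · exact d1 _ hz1 (Or.inl (h'.symm ▸ h''))
          · exact d1 _ hz1 (Or.inr (Or.inl (h'.symm ▸ h'')))
        · exact d1 _ hz1 (Or.inr (Or.inr (Or.inl h')))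
      · rfl
    · rcases hLdP v hv (inB1d _ h) with rfl | rfl
      · exfalso
        rcases (sB1 v).mp h with h' | h'
        · exact hzb h'
        · exact d1 _ hz1 (Or.inr (Or.inl h'))
      · exfalso
        rcases (sB1 v).mp h with h' | h'
        · exact d2 _ hb2 (Or.inr (Or.inl (h' ▸ hw4)))
        · exact d3 _ h' (Or.inl hw4)
  have sV4 : ∀ v ∈ (L.append (R1.reverse.append B1.reverse)).support,
      v ∈ L.support ∨ v ∈ R1.support ∨ v ∈ B1.support := by
    intro v hv
    rcases (Walk.mem_support_append_iff _ _).mp hv with h | h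
    · exact Or.inl h
    · exact Or.inr (sV5 v h)
  have pV3 : (Q1.append (L.append (R1.reverse.append B1.reverse))).IsPath := by
    apply append_isPath pQ1 pV4
    intro v hv hv'
    rcases sV4 v hv' with h | h | h
    · rcases hLdP v h (inQ1d _ hv) with rfl | rfl
      · rfl
      · exfalso
        rcases (sQ1 v).mp hv with h' | h'
        · rcases ha6 with h'' | h''
          · exact d4 _ hw4 (Or.inl (h'.symm ▸ h''))
          · exact d4 _ hw4 (Or.inr (h'.symm ▸ h''))
        · exact d1 _ h' (Or.inr (Or.inr (Or.inl hw4)))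
    · exfalso
      rcases (sQ1 v).mp hv with rfl | h'
      · rcases (sR1 v).mp h with h'' | h''
        · exact haa' h''
        · rcases ha6 with h''' | h'''
          · exact d4 _ h'' (Or.inl h''')
          · exact d4 _ h'' (Or.inr h''')
      · rcases (sR1 v).mp h with rfl | h''
        · rcases ha'3 with h''' | h'''
          · exact d1 _ h' (Or.inl h''')
          · exact d1 _ h' (Or.inr (Or.inl h'''))
        · exact d1 _ h' (Or.inr (Or.inr (Or.inl h'')))
    · exfalso
      rcases (sQ1 v).mp hv with rfl | h'
      · rcases (sB1 v).mp h with h'' | h''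
        · exact hab h''
        · rcases ha6 with h''' | h'''
          · exact d3 _ h'' (Or.inr (Or.inl h'''))
          · exact d3 _ h'' (Or.inr (Or.inr h'''))
      · rcases (sB1 v).mp h with rfl | h''
        · exact d1 _ h' (Or.inl hb2)
        · exact d1 _ h' (Or.inr (Or.inl h''))
  have sV3 : ∀ v ∈ (Q1.append (L.append (R1.reverse.append B1.reverse))).support,
      v ∈ Q1.support ∨ v ∈ L.support ∨ v ∈ R1.support ∨ v ∈ B1.support := by
    intro v hv
    rcases (Walk.mem_support_append_iff _ _).mp hv with h | h
    · exact Or.inl h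
    · exact Or.inr (sV4 v h)
  have pV2 : (B2.append (Q1.append (L.append (R1.reverse.append B1.reverse)))).IsPath := by
    apply append_isPath pB2 pV3
    intro v hv hv'
    rcases sV3 v hv' with h | h | h | h
    · rcases (sQ1 v).mp h with rfl | h'
      · rfl
      · exfalso
        rcases (sB2 v).mp hv with rfl | h''
        · exact d1 _ h' (Or.inr (Or.inr (Or.inr (Or.inl hb'5))))
        · exact d1 _ h' (Or.inr (Or.inr (Or.inr (Or.inr h''))))
    · exfalso
      rcases hLdP v h (inB2d _ hv) with rfl | rfl
      · rcases (sB2 v).mp hv with h' | h'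
        · exact d1 _ hz1 (Or.inr (Or.inr (Or.inr (Or.inl (h'.symm ▸ hb'5)))))
        · exact d1 _ hz1 (Or.inr (Or.inr (Or.inr (Or.inr h'))))
      · rcases (sB2 v).mp hv with h' | h'
        · exact hwb' h'
        · exact d4 _ hw4 (Or.inr h')
    · exfalso
      rcases (sB2 v).mp hv with rfl | h'
      · rcases (sR1 v).mp h with h'' | h''
        · rcases ha'3 with h''' | h'''
          · exact d2 _ h''' (Or.inr (Or.inr (Or.inl (h''.symm ▸ hb'5))))
          · exact d3 _ h''' (Or.inr (Or.inl (h''.symm ▸ hb'5)))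
        · exact d4 _ h'' (Or.inl hb'5)
      · rcases (sR1 v).mp h with rfl | h''
        · rcases ha'3 with h''' | h'''
          · exact d2 _ h''' (Or.inr (Or.inr (Or.inr h')))
          · exact d3 _ h''' (Or.inr (Or.inr h'))
        · exact d4 _ h'' (Or.inr h')
    · exfalso
      rcases (sB2 v).mp hv with rfl | h'
      · rcases (sB1 v).mp h with h'' | h''
        · exact hbb' h''.symm
        · exact d3 _ h'' (Or.inr (Or.inl hb'5))
      · rcases (sB1 v).mp h with rfl | h''
        · exact d2 _ hb2 (Or.inr (Or.inr (Or.inr h')))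
        · exact d3 _ h'' (Or.inr (Or.inr h'))
  have sV2 : ∀ v ∈ (B2.append (Q1.append (L.append (R1.reverse.append B1.reverse)))).support,
      v ∈ d.support ∨ v ∈ L.support := by
    intro v hv
    rcases (Walk.mem_support_append_iff _ _).mp hv with h | h
    · exact Or.inl (inB2d _ h)
    · rcases sV3 v h with h' | h' | h' | h'
      · exact Or.inl (inQ1d _ h')
      · exact Or.inr h'
      · exact Or.inl (inR1d _ h')
      · exact Or.inl (inB1d _ h')
  have pV1'' : (Walk.cons hyb'
      (B2.append (Q1.append (L.append (R1.reverse.append B1.reverse))))).IsPath := by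
    rw [Walk.cons_isPath_iff]
    refine ⟨pV2, fun hcon => ?_⟩
    rcases sV2 y hcon with h | h
    · exact hyd h
    · exact hyL h
  have pRest' : (P.append (Walk.cons hyb'
      (B2.append (Q1.append (L.append (R1.reverse.append B1.reverse)))))).IsPath := by
    apply append_isPath hP pV1''
    intro v hv hv'
    rw [Walk.support_cons, List.mem_cons] at hv'
    rcases hv' with rfl | hv'
    · rfl
    · exfalso
      rcases sV2 v hv' with h | h
      · exact hPd _ hv h
      · exact hPL _ hv h
  have hW2cyc : (Walk.cons hbx (P.append (Walk.cons hyb'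
      (B2.append (Q1.append (L.append (R1.reverse.append B1.reverse))))))).IsCycle := by
    rw [Walk.cons_isCycle_iff]
    refine ⟨pRest', fun hcon => ?_⟩
    rw [Walk.edges_append, List.mem_append] at hcon
    rcases hcon with hcon | hcon
    · exact hPd _ (P.fst_mem_support_of_mem_edges hcon)
        ((hdmem b).mpr (Or.inr (Or.inr (Or.inl hb2))))
    · rw [Walk.edges_cons, List.mem_cons] at hcon
      rcases hcon with hcon | hcon
      · rcases Sym2.eq_iff.mp hcon with ⟨h4, h5⟩ | ⟨h4, h5⟩
        · exact hyd (h4 ▸ (hdmem b).mpr (Or.inr (Or.inr (Or.inl hb2))))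
        · exact hbb' h4
      · have hx2 : x ∈ (B2.append (Q1.append (L.append
            (R1.reverse.append B1.reverse)))).support :=
          Walk.snd_mem_support_of_mem_edges _ hcon
        rcases sV2 x hx2 with h | h
        · exact hxd h
        · exact hxL h
  have h2 := Hmax b _ hW2cyc
  simp only [Walk.length_cons, Walk.length_append, Walk.length_reverse] at h2
  have hdl : d.length = Q1.length + (Q2.length + (B1.length + (R1.length +
      (R2.length + B2.length)))) := by
    rw [hddef]
    simp only [Walk.length_append]
  omega
end M
end ExchangeHelpers

theorem stmt_3 [Fintype V] [DecidableEq V] (G : SimpleGraph V) [DecidableRel G.Adj]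
    {u x y : V} (c : G.Walk u u) (P : G.Walk x y)
    (hc : IsLongestCycle c) (hP : IsLongestPathOutside c P)
    (heq : NC G c x = NC G c y) (h2 : 2 ≤ (NC G c x).card)
    {a b a' b' z w : V} (Ia : G.Walk a b) (Ib : G.Walk a' b')
    (hIa : IsSegment c (NC G c x) Ia) (hIb : IsSegment c (NC G c x) Ib)
    (hdisj : ∀ v, v ∈ interior Ia → v ∉ interior Ib)
    (L : G.Walk z w) (hL : IsIntermediatePath c P Ia Ib L) :
    2 * P.length + 2 * L.length + 4 ≤ Ia.length + Ib.length := by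
  classical
  obtain ⟨hcyc, hcmax⟩ := hc
  obtain ⟨hPpath, hPavoid, -⟩ := hP
  obtain ⟨pIa, hIalen, haA, hbA, hIasup, hIaedge, hIaint⟩ := hIa
  obtain ⟨pIb, hIblen, ha'A, hb'A, hIbsup, hIbedge, hIbint⟩ := hIb
  obtain ⟨pL, hLlen, hzint, hwint, hLdisj⟩ := hL
  obtain ⟨hzsup, hzna, hznb⟩ := hzint
  obtain ⟨hwsup, hwna', hwnb'⟩ := hwint
  have hax : G.Adj a x := by
    have := (Finset.mem_filter.mp haA).1
    rw [SimpleGraph.mem_neighborFinset] at this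
    exact this.symm
  have hbx : G.Adj b x := by
    have := (Finset.mem_filter.mp hbA).1
    rw [SimpleGraph.mem_neighborFinset] at this
    exact this.symm
  have hya' : G.Adj y a' := by
    have := (Finset.mem_filter.mp (heq ▸ ha'A)).1
    rw [SimpleGraph.mem_neighborFinset] at this
    exact this
  have hyb' : G.Adj y b' := by
    have := (Finset.mem_filter.mp (heq ▸ hb'A)).1
    rw [SimpleGraph.mem_neighborFinset] at this
    exact this
  have hzw : z ≠ w := by
    intro h
    subst h
    exact hdisj z ⟨hzsup, hzna, hznb⟩ ⟨hwsup, hwna', hwnb'⟩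
  have hIa2 := two_le_length_of_internal Ia hzsup hzna hznb
  have hIb2 := two_le_length_of_internal Ib hwsup hwna' hwnb'
  obtain ⟨E, hd0cyc, hd0len, hd0edge, hd0sup⟩ := arc c hcyc Ia pIa (by omega) hIaedge
  have hanb : a ≠ b := by
    intro h
    subst h
    have := closed_path_length pIa
    omega
  have hnd0 := ((Walk.isCycle_def _).mp hd0cyc).2.2
  rw [Walk.tail_support_append] at hnd0
  obtain ⟨nIat, nEt, dIaE⟩ := List.nodup_append.mp hnd0
  have pE : E.IsPath := by
    apply Walk.IsPath.mk'
    rw [E.support_eq_cons]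
    exact List.Nodup.cons
      (fun hmem => dIaE _ (Walk.end_mem_tail_support_of_ne hanb Ia) _ hmem rfl) nEt
  have hvmem : ∀ v, v ∈ Ia.support → v ∈ Ib.support →
      (v = a ∨ v = b) ∧ (v = a' ∨ v = b') := by
    intro v hvIa hvIb
    have hAB : v = a ∨ v = b := by
      by_contra hcon
      push_neg at hcon
      have hint : v ∈ interior Ia := ⟨hvIa, hcon.1, hcon.2⟩
      have hnint := hdisj v hint
      have hA : v ∉ NC G c x := hIaint v hint
      rcases (show v = a' ∨ v = b' by
        by_contra hcon2
        push_neg at hcon2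
        exact hnint ⟨hvIb, hcon2.1, hcon2.2⟩) with rfl | rfl
      · exact hA ha'A
      · exact hA hb'A
    refine ⟨hAB, ?_⟩
    by_contra hcon2
    push_neg at hcon2
    have hint : v ∈ interior Ib := ⟨hvIb, hcon2.1, hcon2.2⟩
    have hB := hIbint v hint
    rcases hAB with rfl | rfl
    · exact hB haA
    · exact hB hbA
  have hIbE : ∀ e ∈ Ib.edges, e ∈ E.edges := by
    intro e he
    have hed0 : e ∈ (Ia.append E).edges := (hd0edge e).mpr (hIbedge e he)
    rw [Walk.edges_append, List.mem_append] at hed0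
    rcases hed0 with hIae | hEe
    · exfalso
      induction e using Sym2.ind with
      | _ x1 x2 =>
        have h1a := Ia.fst_mem_support_of_mem_edges hIae
        have h2a := Ia.snd_mem_support_of_mem_edges hIae
        have h1b := Ib.fst_mem_support_of_mem_edges he
        have h2b := Ib.snd_mem_support_of_mem_edges he
        have h12 : x1 ≠ x2 := G.ne_of_adj (Ib.adj_of_mem_edges he)
        obtain ⟨hx1, -⟩ := hvmem x1 h1a h1b
        obtain ⟨hx2, -⟩ := hvmem x2 h2a h2b
        have heab : s(x1, x2) = s(a, b) := by
          rcases hx1 with rfl | rfl <;> rcases hx2 with rfl | rfl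
          · exact absurd rfl h12
          · rfl
          · exact Sym2.eq_swap
          · exact absurd rfl h12
        rw [heab] at hIae
        have := edge_between_ends Ia pIa hIae
        omega
    · exact hEe
  rcases path_infix E pE Ib pIb (by omega) hIbE with ⟨B1, B2, hEdec⟩ | ⟨B1, B2, hEdec⟩
  · -- Ib appears with the same orientation
    have hdeq : Ia.append E =
        (Ia.takeUntil z hzsup).append ((Ia.dropUntil z hzsup).append (B1.append
          ((Ib.takeUntil w hwsup).append ((Ib.dropUntil w hwsup).append B2)))) := by
      conv_lhs => rw [hEdec, ← Ia.take_spec hzsup, ← Ib.take_spec hwsup]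
      simp only [Walk.append_assoc]
    have hlen6 := hd0len
    rw [hdeq] at hlen6 hd0cyc hd0sup
    have key := main_M (Ia.takeUntil z hzsup) (Ia.dropUntil z hzsup) B1
      (Ib.takeUntil w hwsup) (Ib.dropUntil w hwsup) B2 hd0cyc
      (fun v q hq => by rw [hlen6]; exact hcmax v q hq)
      hzna hznb hwna' hwnb' hzw P hPpath
      (fun v hv hvs => hPavoid v hv ((hd0sup v).mp hvs))
      L pL hLlen
      (fun v hv h => hLdisj v hv (by
        rcases h with h' | h'
        · exact Or.inl ((hd0sup v).mp h')
        · exact Or.inr h'))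
      hax hbx hya' hyb'
    have lQ : (Ia.takeUntil z hzsup).length + (Ia.dropUntil z hzsup).length = Ia.length := by
      have h9 := congrArg Walk.length (Ia.take_spec hzsup)
      rwa [Walk.length_append] at h9
    have lR : (Ib.takeUntil w hwsup).length + (Ib.dropUntil w hwsup).length = Ib.length := by
      have h9 := congrArg Walk.length (Ib.take_spec hwsup)
      rwa [Walk.length_append] at h9
    omega
  · -- Ib appears reversed
    have hwsup' : w ∈ Ib.reverse.support := by
      rw [Walk.support_reverse, List.mem_reverse]
      exact hwsup
    have hdeq : Ia.append E =
        (Ia.takeUntil z hzsup).append ((Ia.dropUntil z hzsup).append (B1.append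
          ((Ib.reverse.takeUntil w hwsup').append
            ((Ib.reverse.dropUntil w hwsup').append B2)))) := by
      conv_lhs => rw [hEdec, ← Ia.take_spec hzsup, ← Ib.reverse.take_spec hwsup']
      simp only [Walk.append_assoc]
    have hlen6 := hd0len
    rw [hdeq] at hlen6 hd0cyc hd0sup
    have key := main_M (Ia.takeUntil z hzsup) (Ia.dropUntil z hzsup) B1
      (Ib.reverse.takeUntil w hwsup') (Ib.reverse.dropUntil w hwsup') B2 hd0cyc
      (fun v q hq => by rw [hlen6]; exact hcmax v q hq)
      hzna hznb hwnb' hwna' hzw P hPpath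
      (fun v hv hvs => hPavoid v hv ((hd0sup v).mp hvs))
      L pL hLlen
      (fun v hv h => hLdisj v hv (by
        rcases h with h' | h'
        · exact Or.inl ((hd0sup v).mp h')
        · exact Or.inr h'))
      hax hbx hyb' hya'
    have lQ : (Ia.takeUntil z hzsup).length + (Ia.dropUntil z hzsup).length = Ia.length := by
      have h9 := congrArg Walk.length (Ia.take_spec hzsup)
      rwa [Walk.length_append] at h9
    have lR : (Ib.reverse.takeUntil w hwsup').length +
        (Ib.reverse.dropUntil w hwsup').length = Ib.length := by
      have h9 := congrArg Walk.length (Ib.reverse.take_spec hwsup')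
      rwa [Walk.length_append, Walk.length_reverse] at h9
    omega
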